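/- arXiv:1612.08295 — 5 statements merged into one kernel-verified Lean document; each statement's English description precedes it below -/
import Mathlib

section
/- ᾱ is monotone at infinity: if E, F ⊆ ℝⁿ satisfy E \ B_r(q) ⊆ F \ B_r(q) for some r > 0 and q ∈ ℝⁿ, then ᾱ(E) ≤ ᾱ(F). -/
open MeasureTheory Filter Metric Topology
open Set

/-- The weighted tail integral `∫_{ℝⁿ \ B_r(q)} χ_E(y) / |q - y|^{n+s} dy`. -/
noncomputable def tailIntegral (n : ℕ) (E : Set (EuclideanSpace ℝ (Fin n))) (s : ℝ)
    (q : EuclideanSpace ℝ (Fin n)) (r : ℝ) : ℝ :=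
  ∫ y in (ball q r)ᶜ, E.indicator (fun _ => (1 : ℝ)) y / ‖q - y‖ ^ ((n : ℝ) + s)

/-- `ᾱ(E) = limsup_{s→0⁺} s · ∫_{ℝⁿ \ B₁} χ_E(y)/|y|^{n+s} dy`. -/
noncomputable def alphaBar (n : ℕ) (E : Set (EuclideanSpace ℝ (Fin n))) : ℝ :=
  limsup (fun s : ℝ => s * tailIntegral n E s 0 1) (𝓝[>] (0 : ℝ))

section Aux

variable {n : ℕ}

lemma aux_norm_rpow_le {y : EuclideanSpace ℝ (Fin n)} (hy : 1 ≤ ‖y‖) {p : ℝ} (hp : 0 ≤ p) :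
    ‖y‖ ^ (-p) ≤ (2 : ℝ) ^ p * (1 + ‖y‖) ^ (-p) := by
  have h0 : (0 : ℝ) < ‖y‖ := lt_of_lt_of_le one_pos hy
  have h1 : (0:ℝ) < 1 + ‖y‖ := by linarith
  have hkey : (2 : ℝ)⁻¹ * (1 + ‖y‖) ≤ ‖y‖ := by linarith
  have h2 : ‖y‖ ^ (-p) ≤ ((2:ℝ)⁻¹ * (1 + ‖y‖)) ^ (-p) :=
    Real.rpow_le_rpow_of_nonpos (by positivity) hkey (neg_nonpos.2 hp)
  calc ‖y‖ ^ (-p) ≤ ((2:ℝ)⁻¹ * (1 + ‖y‖)) ^ (-p) := h2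
    _ = (2:ℝ) ^ p * (1 + ‖y‖) ^ (-p) := by
        rw [Real.mul_rpow (by positivity) h1.le, Real.inv_rpow (by positivity),
          ← Real.rpow_neg (by positivity), neg_neg]

lemma aux_integrableOn_rpow {s : ℝ} (hs : 0 < s) :
    IntegrableOn (fun y : EuclideanSpace ℝ (Fin n) => ‖y‖ ^ (-((n:ℝ) + s)))
      (ball (0 : EuclideanSpace ℝ (Fin n)) 1)ᶜ := by
  have hnr : (Module.finrank ℝ (EuclideanSpace ℝ (Fin n)) : ℝ) < (n:ℝ) + s := by
    rw [finrank_euclideanSpace, Fintype.card_fin]; linarith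
  have h1 : Integrable (fun y : EuclideanSpace ℝ (Fin n) =>
      (2:ℝ) ^ ((n:ℝ) + s) * (1 + ‖y‖) ^ (-((n:ℝ) + s))) :=
    (integrable_one_add_norm hnr).const_mul _
  refine (h1.integrableOn).mono' ?_ ?_
  · exact (Measurable.aestronglyMeasurable (by fun_prop)).restrict
  · rw [ae_restrict_iff' measurableSet_ball.compl]
    filter_upwards with y hy
    have hy1 : 1 ≤ ‖y‖ := by
      simpa [mem_ball, dist_zero_right] using hy
    rw [Real.norm_eq_abs, abs_of_nonneg (Real.rpow_nonneg (norm_nonneg y) _)]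
    exact aux_norm_rpow_le hy1 (by positivity)

lemma aux_integrableOn_ind {A : Set (EuclideanSpace ℝ (Fin n))} (hA : MeasurableSet A)
    {s : ℝ} (hs : 0 < s) :
    IntegrableOn (fun y : EuclideanSpace ℝ (Fin n) =>
      A.indicator (fun _ => (1:ℝ)) y / ‖(0 : EuclideanSpace ℝ (Fin n)) - y‖ ^ ((n:ℝ) + s))
      (ball (0 : EuclideanSpace ℝ (Fin n)) 1)ᶜ := by
  refine (aux_integrableOn_rpow hs).mono' ?_ ?_
  · refine Measurable.aestronglyMeasurable ?_ |>.restrict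
    exact (measurable_const.indicator hA).div (by fun_prop)
  · rw [ae_restrict_iff' measurableSet_ball.compl]
    filter_upwards with y hy
    have hy1 : 1 ≤ ‖y‖ := by simpa [mem_ball, dist_zero_right] using hy
    have h0 : (0:ℝ) < ‖y‖ := lt_of_lt_of_le one_pos hy1
    rw [zero_sub, norm_neg, Real.norm_eq_abs, Real.rpow_neg (norm_nonneg y), abs_div]
    rw [div_eq_mul_inv]
    have hpow : |‖y‖ ^ ((n:ℝ) + s)| = ‖y‖ ^ ((n:ℝ) + s) :=
      abs_of_nonneg (Real.rpow_nonneg (norm_nonneg y) _)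
    rw [hpow]
    have hind : |A.indicator (fun _ => (1:ℝ)) y| ≤ 1 := by
      by_cases hyA : y ∈ A <;> simp [hyA]
    calc |A.indicator (fun _ => (1:ℝ)) y| * (‖y‖ ^ ((n:ℝ) + s))⁻¹
        ≤ 1 * (‖y‖ ^ ((n:ℝ) + s))⁻¹ := by
          gcongr
      _ = (‖y‖ ^ ((n:ℝ) + s))⁻¹ := one_mul _

end Aux

lemma aux_integral_rpow_eq {n : ℕ} (hn : 0 < n) {s : ℝ} (hs : 0 < s) :
    ∫ y in (ball (0 : EuclideanSpace ℝ (Fin n)) 1)ᶜ, ‖y‖ ^ (-((n:ℝ) + s)) =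
      (n : ℝ) * (volume (ball (0 : EuclideanSpace ℝ (Fin n)) 1)).toReal * (1 / s) := by
  haveI : Nontrivial (EuclideanSpace ℝ (Fin n)) :=
    Module.nontrivial_of_finrank_pos (R := ℝ)
      (by rw [finrank_euclideanSpace_fin]; exact hn)
  set f : ℝ → ℝ := (Ici (1:ℝ)).indicator (fun t => t ^ (-((n:ℝ)+s))) with hf
  have hcomp : ∀ x : EuclideanSpace ℝ (Fin n),
      ((ball (0 : EuclideanSpace ℝ (Fin n)) 1)ᶜ).indicator
        (fun y => ‖y‖ ^ (-((n:ℝ)+s))) x = f ‖x‖ := by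
    intro x
    by_cases hx : x ∈ (ball (0 : EuclideanSpace ℝ (Fin n)) 1)ᶜ
    · have hx1 : ‖x‖ ∈ Ici (1:ℝ) := by simpa [mem_ball, dist_zero_right] using hx
      rw [indicator_of_mem hx, hf, indicator_of_mem hx1]
    · have hx1 : ‖x‖ ∉ Ici (1:ℝ) := by
        simp only [mem_compl_iff, not_not] at hx
        simpa [mem_Ici, not_le] using (by simpa [mem_ball, dist_zero_right] using hx : ‖x‖ < 1)
      rw [indicator_of_notMem hx, hf, indicator_of_notMem hx1]
  have hinner : ∫ y in Ioi (0:ℝ), y ^ (n - 1) • f y = 1 / s := by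
    have hn1 : 1 ≤ n := hn
    have h1 : ∀ y : ℝ, y ^ (n-1) • f y =
        (Ici (1:ℝ)).indicator (fun t => t ^ (-(1+s))) y := by
      intro y
      by_cases hy : y ∈ Ici (1:ℝ)
      · rw [hf, indicator_of_mem hy, indicator_of_mem hy]
        have hy0 : (0:ℝ) < y := lt_of_lt_of_le one_pos hy
        rw [smul_eq_mul, ← Real.rpow_natCast y (n-1), ← Real.rpow_add hy0]
        congr 1
        push_cast [Nat.cast_sub hn1]
        ring
      · simp [hf, indicator_of_notMem hy]
    simp_rw [h1]
    rw [setIntegral_indicator measurableSet_Ici,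
      show Ioi (0:ℝ) ∩ Ici 1 = Ici 1 from
        inter_eq_self_of_subset_right (fun x hx => mem_Ioi.2 (lt_of_lt_of_le one_pos (mem_Ici.1 hx))),
      integral_Ici_eq_integral_Ioi,
      integral_Ioi_rpow_of_lt (by linarith) one_pos]
    rw [show -(1+s) + 1 = -s by ring, Real.one_rpow]
    field_simp
  rw [← integral_indicator measurableSet_ball.compl]
  calc (∫ x, ((ball (0 : EuclideanSpace ℝ (Fin n)) 1)ᶜ).indicator
        (fun y => ‖y‖ ^ (-((n:ℝ)+s))) x)
      = ∫ x : EuclideanSpace ℝ (Fin n), f ‖x‖ := by simp_rw [hcomp]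
    _ = (Module.finrank ℝ (EuclideanSpace ℝ (Fin n))) •
          (volume (ball (0 : EuclideanSpace ℝ (Fin n)) 1)).toReal •
          ∫ y in Ioi (0:ℝ), y ^ (Module.finrank ℝ (EuclideanSpace ℝ (Fin n)) - 1) • f y :=
        MeasureTheory.integral_fun_norm_addHaar volume f
    _ = (n : ℝ) * (volume (ball (0 : EuclideanSpace ℝ (Fin n)) 1)).toReal * (1 / s) := by
        rw [finrank_euclideanSpace_fin, hinner, nsmul_eq_mul, smul_eq_mul]
        ring

lemma aux_tail_nonneg (n : ℕ) (A : Set (EuclideanSpace ℝ (Fin n))) (s : ℝ)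
    (q : EuclideanSpace ℝ (Fin n)) (r : ℝ) : 0 ≤ tailIntegral n A s q r := by
  simp only [tailIntegral]
  refine integral_nonneg fun y => ?_
  exact div_nonneg (indicator_nonneg (fun _ _ => zero_le_one) y)
    (Real.rpow_nonneg (norm_nonneg _) _)

lemma aux_key {n : ℕ} {E F : Set (EuclideanSpace ℝ (Fin n))}
    (hE : MeasurableSet E) (hF : MeasurableSet F)
    {q : EuclideanSpace ℝ (Fin n)} {r : ℝ}
    (h : E \ ball q r ⊆ F \ ball q r) {s : ℝ} (hs : 0 < s) :
    tailIntegral n E s 0 1 ≤ tailIntegral n F s 0 1 + (volume (ball q r)).toReal := by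
  simp only [tailIntegral]
  have hball : Integrable ((ball q r).indicator (fun _ => (1:ℝ))) volume :=
    (integrable_indicator_iff measurableSet_ball).2
      (integrableOn_const measure_ball_lt_top.ne)
  have h2 : tailIntegral n E s 0 1 ≤
      ∫ y in (ball (0 : EuclideanSpace ℝ (Fin n)) 1)ᶜ,
        (F.indicator (fun _ => (1:ℝ)) y / ‖(0 : EuclideanSpace ℝ (Fin n)) - y‖ ^ ((n:ℝ)+s)
          + (ball q r).indicator (fun _ => (1:ℝ)) y) := by
    refine setIntegral_mono_on (aux_integrableOn_ind hE hs)
      ((aux_integrableOn_ind hF hs).add hball.integrableOn)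
      measurableSet_ball.compl (fun y hy => ?_)
    have hy1 : (1:ℝ) ≤ ‖y‖ := by simpa [mem_ball, dist_zero_right] using hy
    have hpow : (1:ℝ) ≤ ‖(0 : EuclideanSpace ℝ (Fin n)) - y‖ ^ ((n:ℝ)+s) := by
      rw [zero_sub, norm_neg]; exact Real.one_le_rpow hy1 (by positivity)
    have hFnn : 0 ≤ F.indicator (fun _ => (1:ℝ)) y / ‖(0 : EuclideanSpace ℝ (Fin n)) - y‖ ^ ((n:ℝ)+s) :=
      div_nonneg (indicator_nonneg (fun _ _ => zero_le_one) y)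
        (Real.rpow_nonneg (norm_nonneg _) _)
    by_cases hyE : y ∈ E
    · by_cases hyq : y ∈ ball q r
      · have hle1 : E.indicator (fun _ => (1:ℝ)) y / ‖(0 : EuclideanSpace ℝ (Fin n)) - y‖ ^ ((n:ℝ)+s) ≤ 1 := by
          rw [indicator_of_mem hyE]
          exact div_le_one_of_le₀ hpow (by positivity)
        have : (ball q r).indicator (fun _ => (1:ℝ)) y = 1 := indicator_of_mem hyq _
        rw [this] at *
        linarith
      · have hyF : y ∈ F := (h ⟨hyE, hyq⟩).1
        rw [indicator_of_mem hyE, indicator_of_mem hyF]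
        have : 0 ≤ (ball q r).indicator (fun _ => (1:ℝ)) y :=
          indicator_nonneg (fun _ _ => zero_le_one) y
        linarith
    · rw [indicator_of_notMem hyE, zero_div]
      have : 0 ≤ (ball q r).indicator (fun _ => (1:ℝ)) y :=
        indicator_nonneg (fun _ _ => zero_le_one) y
      linarith
  rw [integral_add (aux_integrableOn_ind hF hs) hball.integrableOn] at h2
  refine h2.trans (add_le_add_right ?_ _)
  calc ∫ y in (ball (0 : EuclideanSpace ℝ (Fin n)) 1)ᶜ,
      (ball q r).indicator (fun _ => (1:ℝ)) y
      = ((volume.restrict (ball (0 : EuclideanSpace ℝ (Fin n)) 1)ᶜ) (ball q r)).toReal • (1:ℝ) :=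
        integral_indicator_const (1:ℝ) measurableSet_ball
    _ ≤ (volume (ball q r)).toReal := by
        rw [smul_eq_mul, mul_one]
        exact ENNReal.toReal_mono measure_ball_lt_top.ne (Measure.restrict_apply_le _ _)

lemma aux_tail_le {n : ℕ} (hn : 0 < n) {F : Set (EuclideanSpace ℝ (Fin n))}
    (hF : MeasurableSet F) {s : ℝ} (hs : 0 < s) :
    tailIntegral n F s 0 1 ≤
      (n : ℝ) * (volume (ball (0 : EuclideanSpace ℝ (Fin n)) 1)).toReal * (1 / s) := by
  simp only [tailIntegral]
  rw [← aux_integral_rpow_eq hn hs]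
  refine setIntegral_mono_on (aux_integrableOn_ind hF hs) (aux_integrableOn_rpow hs)
    measurableSet_ball.compl (fun y hy => ?_)
  have hy1 : (1:ℝ) ≤ ‖y‖ := by simpa [mem_ball, dist_zero_right] using hy
  have h0 : (0:ℝ) < ‖y‖ := lt_of_lt_of_le one_pos hy1
  rw [zero_sub, norm_neg, Real.rpow_neg (norm_nonneg y), div_eq_mul_inv]
  have : F.indicator (fun _ => (1:ℝ)) y ≤ 1 := indicator_le_self' (fun _ _ => zero_le_one) y
  calc F.indicator (fun _ => (1:ℝ)) y * (‖y‖ ^ ((n:ℝ)+s))⁻¹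
      ≤ 1 * (‖y‖ ^ ((n:ℝ)+s))⁻¹ := by gcongr
    _ = (‖y‖ ^ ((n:ℝ)+s))⁻¹ := one_mul _

/-- Monotonicity of `ᾱ` at infinity: if `E \ B_r(q) ⊆ F \ B_r(q)` for some `r > 0` and
`q ∈ ℝⁿ`, then `ᾱ(E) ≤ ᾱ(F)`. -/
theorem alphaBar_mono (n : ℕ) (E F : Set (EuclideanSpace ℝ (Fin n)))
    (hE : MeasurableSet E) (hF : MeasurableSet F)
    (r : ℝ) (hr : 0 < r) (q : EuclideanSpace ℝ (Fin n))
    (h : E \ ball q r ⊆ F \ ball q r) :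
    alphaBar n E ≤ alphaBar n F := by

  rcases Nat.eq_zero_or_pos n with hn | hn
  · subst hn
    have hGe : ∀ (G : Set (EuclideanSpace ℝ (Fin 0))) (s : ℝ),
        tailIntegral 0 G s 0 1 = 0 := by
      intro G s
      have hb : (ball (0 : EuclideanSpace ℝ (Fin 0)) 1)ᶜ = ∅ := by
        ext y
        simp [mem_ball, Subsingleton.elim y (0 : EuclideanSpace ℝ (Fin 0))]
      simp only [tailIntegral, hb, Measure.restrict_empty, integral_zero_measure]
    unfold alphaBar
    simp only [hGe]
    exact le_rfl
  · set L := 𝓝[>] (0:ℝ)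
    set V := (volume (ball q r)).toReal with hV
    set C := (n:ℝ) * (volume (ball (0 : EuclideanSpace ℝ (Fin n)) 1)).toReal with hC
    set g := fun s : ℝ => s * tailIntegral n F s 0 1 with hg
    set f := fun s : ℝ => s * tailIntegral n E s 0 1 with hf
    have hV0 : 0 ≤ V := ENNReal.toReal_nonneg
    have hpos : ∀ᶠ s in L, 0 < s := self_mem_nhdsWithin
    have hgC : ∀ᶠ s in L, g s ≤ C := by
      filter_upwards [hpos] with s hs
      have h1 : tailIntegral n F s 0 1 ≤ C * (1 / s) := by
        rw [hC]; exact aux_tail_le hn hF hs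
      calc g s ≤ s * (C * (1 / s)) := by
            exact mul_le_mul_of_nonneg_left h1 hs.le
        _ = C := by field_simp
    have hg0 : ∀ᶠ s in L, 0 ≤ g s := by
      filter_upwards [hpos] with s hs
      exact mul_nonneg hs.le (aux_tail_nonneg n F s 0 1)
    have hf_le : ∀ᶠ s in L, f s ≤ g s + s * V := by
      filter_upwards [hpos] with s hs
      have := aux_key hE hF h hs
      calc f s ≤ s * (tailIntegral n F s 0 1 + V) :=
            mul_le_mul_of_nonneg_left (by rw [hV]; exact this) hs.le
        _ = g s + s * V := by ring
    have htend : Tendsto (fun s : ℝ => s * V) L (𝓝 0) := by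
      have h1 : Tendsto (fun s : ℝ => s) L (𝓝 0) :=
        tendsto_id.mono_right nhdsWithin_le_nhds
      simpa using h1.mul_const V
    refine le_of_forall_pos_le_add fun ε hε => ?_
    have hεev : ∀ᶠ s in L, s * V < ε := htend.eventually (gt_mem_nhds hε)
    have hev2 : ∀ᶠ s in L, f s ≤ g s + ε := by
      filter_upwards [hf_le, hεev] with s h1 h2; linarith
    have hfbdd : IsCoboundedUnder (· ≤ ·) L f := by
      refine IsBoundedUnder.isCoboundedUnder_le ?_
      refine isBoundedUnder_of_eventually_ge (a := (0:ℝ)) ?_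
      filter_upwards [hpos] with s hs
      exact mul_nonneg hs.le (aux_tail_nonneg n E s 0 1)
    have hgεbdd : IsBoundedUnder (· ≤ ·) L (fun s => g s + ε) :=
      isBoundedUnder_of_eventually_le (a := C + ε)
        (by filter_upwards [hgC] with s h1; linarith)
    have h3 : limsup f L ≤ limsup (fun s => g s + ε) L :=
      limsup_le_limsup hev2 hfbdd hgεbdd
    have h4 : limsup (fun s => g s + ε) L = limsup g L + ε :=
      limsup_add_const L g ε (isBoundedUnder_of_eventually_le hgC)
        ((isBoundedUnder_of_eventually_ge hg0).isCoboundedUnder_le)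
    calc alphaBar n E = limsup f L := rfl
      _ ≤ limsup (fun s => g s + ε) L := h3
      _ = alphaBar n F + ε := by rw [h4]; rfl
end

section
/- ᾱ is invariant under translations: for every E ⊆ ℝⁿ and x ∈ ℝⁿ, ᾱ(E + x) = ᾱ(E). Moreover, for every rotation R ∈ SO(n), ᾱ(R E) = ᾱ(E). -/
open MeasureTheory Filter Metric Topology

lemma aux_limsup_eq {l : Filter ℝ} [l.NeBot] {F G : ℝ → ℝ}
    (hF : ∀ᶠ s in l, 0 ≤ F s) (hG : ∀ᶠ s in l, 0 ≤ G s)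
    (h : Tendsto (fun s => G s - F s) l (𝓝 0)) :
    limsup G l = limsup F l := by
  rw [limsup_eq, limsup_eq]
  set A := {a : ℝ | ∀ᶠ s in l, G s ≤ a} with hA
  set B := {a : ℝ | ∀ᶠ s in l, F s ≤ a} with hB
  have key : ∀ ε : ℝ, 0 < ε → ∀ a ∈ B, a + ε ∈ A := by
    intro ε hε a ha
    have h1 : ∀ᶠ s in l, G s - F s ≤ ε := h.eventually (eventually_le_nhds hε)
    filter_upwards [h1, ha] with s h1 h2
    linarith
  have key' : ∀ ε : ℝ, 0 < ε → ∀ a ∈ A, a + ε ∈ B := by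
    intro ε hε a ha
    have h0 : Tendsto (fun s => F s - G s) l (𝓝 0) := by
      have := h.neg
      rw [neg_zero] at this
      simpa using this
    have h1 : ∀ᶠ s in l, F s - G s ≤ ε := h0.eventually (eventually_le_nhds hε)
    filter_upwards [h1, ha] with s h1 h2
    linarith
  have hAnn : ∀ a ∈ A, (0:ℝ) ≤ a := by
    intro a ha
    obtain ⟨s, h1, h2⟩ := (ha.and hG).exists
    linarith
  have hBnn : ∀ a ∈ B, (0:ℝ) ≤ a := by
    intro a ha
    obtain ⟨s, h1, h2⟩ := (ha.and hF).exists
    linarith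
  have hbddA : BddBelow A := ⟨0, hAnn⟩
  have hbddB : BddBelow B := ⟨0, hBnn⟩
  by_cases hBne : B.Nonempty
  · have hAne : A.Nonempty := ⟨hBne.choose + 1, key 1 one_pos _ hBne.choose_spec⟩
    apply le_antisymm
    · refine le_of_forall_pos_le_add fun ε hε => ?_
      have h1 : ∀ a ∈ B, sInf A - ε ≤ a := fun a ha => by
        have := csInf_le hbddA (key ε hε a ha); linarith
      have := le_csInf hBne h1; linarith
    · refine le_of_forall_pos_le_add fun ε hε => ?_
      have h1 : ∀ a ∈ A, sInf B - ε ≤ a := fun a ha => by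
        have := csInf_le hbddB (key' ε hε a ha); linarith
      have := le_csInf hAne h1; linarith
  · have hAne : ¬ A.Nonempty := fun ⟨a, ha⟩ => hBne ⟨a + 1, key' 1 one_pos a ha⟩
    rw [Set.not_nonempty_iff_eq_empty.mp hBne, Set.not_nonempty_iff_eq_empty.mp hAne]

lemma aux_mvt {p m a b : ℝ} (hp : 0 < p) (hm : 0 < m) (ha : m ≤ a) (hb : m ≤ b) :
    |a ^ (-p) - b ^ (-p)| ≤ p * m ^ (-(p+1)) * |a - b| := by
  have key := Convex.norm_image_sub_le_of_norm_hasDerivWithin_le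
    (f := fun t : ℝ => t ^ (-p)) (f' := fun t : ℝ => -p * t ^ (-p - 1))
    (s := Set.Ici m) (C := p * m ^ (-(p+1)))
    (fun t ht => (Real.hasDerivAt_rpow_const
      (Or.inl (ne_of_gt (lt_of_lt_of_le hm ht)))).hasDerivWithinAt)
    (fun t ht => ?_) (convex_Ici m) hb ha
  · simpa [Real.norm_eq_abs] using key
  · have ht0 : (0:ℝ) < t := lt_of_lt_of_le hm ht
    have h1 : t ^ (-p - 1) ≤ m ^ (-(p+1)) := by
      rw [show -p - 1 = -(p+1) by ring]
      exact Real.rpow_le_rpow_of_nonpos hm ht (by linarith)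
    have h2 : (0:ℝ) < t ^ (-p-1) := Real.rpow_pos_of_pos ht0 _
    rw [Real.norm_eq_abs, abs_mul, abs_neg, abs_of_pos hp, abs_of_pos h2]
    exact mul_le_mul_of_nonneg_left h1 hp.le

lemma aux_rpow_neg_le_mul {u v c e : ℝ} (hu : 0 < u) (hv : 0 < v) (he : 0 ≤ e) (hc : 0 ≤ c)
    (h : v ≤ c * u) : u ^ (-e) ≤ c ^ e * v ^ (-e) := by
  have h1 : v ^ e ≤ c ^ e * u ^ e := by
    rw [← Real.mul_rpow hc hu.le]
    exact Real.rpow_le_rpow hv.le h he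
  have hue : (0:ℝ) < u ^ e := Real.rpow_pos_of_pos hu e
  have hve : (0:ℝ) < v ^ e := Real.rpow_pos_of_pos hv e
  rw [Real.rpow_neg hu.le, Real.rpow_neg hv.le]
  have h2 : (1:ℝ)/u^e ≤ c^e/v^e := by
    rw [div_le_div_iff₀ hue hve, one_mul]
    exact h1
  simpa [one_div, div_eq_mul_inv] using h2

lemma tail_nonneg (n : ℕ) (E : Set (EuclideanSpace ℝ (Fin n))) (s : ℝ)
    (q : EuclideanSpace ℝ (Fin n)) (r : ℝ) : 0 ≤ tailIntegral n E s q r :=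
  setIntegral_nonneg measurableSet_ball.compl fun y _ =>
    div_nonneg (Set.indicator_apply_nonneg (fun _ => zero_le_one))
      (Real.rpow_nonneg (norm_nonneg _) _)

variable {n : ℕ} {E : Set (EuclideanSpace ℝ (Fin n))}

/-- The indicator-extended integrand. -/
noncomputable def Fc (E : Set (EuclideanSpace ℝ (Fin n))) (p : ℝ)
    (c : EuclideanSpace ℝ (Fin n)) : EuclideanSpace ℝ (Fin n) → ℝ :=
  fun y => ((ball c 1)ᶜ).indicator (fun y => E.indicator (fun _ => (1:ℝ)) y / ‖c - y‖ ^ p) y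

lemma tail_eq_integral_Fc (s : ℝ) (c : EuclideanSpace ℝ (Fin n)) :
    tailIntegral n E s c 1 = ∫ y, Fc E ((n:ℝ) + s) c y :=
  (integral_indicator measurableSet_ball.compl).symm

lemma Fc_nonneg (p : ℝ) (c : EuclideanSpace ℝ (Fin n)) (y : EuclideanSpace ℝ (Fin n)) :
    0 ≤ Fc E p c y :=
  Set.indicator_apply_nonneg fun _ =>
    div_nonneg (Set.indicator_apply_nonneg (fun _ => zero_le_one))
      (Real.rpow_nonneg (norm_nonneg _) _)

lemma indicator_le_one (y : EuclideanSpace ℝ (Fin n)) :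
    E.indicator (fun _ => (1:ℝ)) y ≤ 1 := by
  classical
  by_cases hy : y ∈ E <;> simp [hy]

lemma norm_ge_of_mem_compl {c y : EuclideanSpace ℝ (Fin n)} (hy : y ∈ (ball c 1)ᶜ) :
    1 ≤ ‖c - y‖ := by
  rw [Set.mem_compl_iff, mem_ball, dist_eq_norm, not_lt, ← norm_sub_rev] at hy
  exact hy

lemma Fc_le_one {p : ℝ} (hp : 0 ≤ p) (c : EuclideanSpace ℝ (Fin n))
    (y : EuclideanSpace ℝ (Fin n)) : Fc E p c y ≤ 1 := by
  unfold Fc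
  by_cases hy : y ∈ (ball c 1)ᶜ
  · rw [Set.indicator_of_mem hy]
    have h1 : 1 ≤ ‖c - y‖ := norm_ge_of_mem_compl hy
    have h2 : (1:ℝ) ≤ ‖c - y‖ ^ p := by
      have := Real.rpow_le_rpow_of_exponent_le h1 hp
      rwa [Real.rpow_zero] at this
    rw [div_le_one (by linarith)]
    exact le_trans (indicator_le_one y) h2
  · rw [Set.indicator_of_notMem hy]; exact zero_le_one

lemma Fc_le_bound {p : ℝ} (hp : 0 < p) (c : EuclideanSpace ℝ (Fin n))
    (y : EuclideanSpace ℝ (Fin n)) :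
    Fc E p c y ≤ 2 ^ p * (1 + ‖y - c‖) ^ (-p) := by
  unfold Fc
  by_cases hy : y ∈ (ball c 1)ᶜ
  · rw [Set.indicator_of_mem hy]
    have h1 : 1 ≤ ‖c - y‖ := norm_ge_of_mem_compl hy
    have h0 : (0:ℝ) < ‖c - y‖ := by linarith
    have h2 : E.indicator (fun _ => (1:ℝ)) y / ‖c - y‖ ^ p ≤ ‖c - y‖ ^ (-p) := by
      rw [Real.rpow_neg h0.le, ← one_div]
      gcongr
      · exact indicator_le_one y
    refine h2.trans ?_
    have h3 : ‖c - y‖ ^ (-p) ≤ 2 ^ p * (1 + ‖c - y‖) ^ (-p) :=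
      aux_rpow_neg_le_mul h0 (by linarith) hp.le (by norm_num) (by linarith)
    rwa [norm_sub_rev y c]
  · rw [Set.indicator_of_notMem hy]
    positivity

lemma Fc_measurable (hE : MeasurableSet E) {p : ℝ} (hp : 0 ≤ p) (c : EuclideanSpace ℝ (Fin n)) :
    Measurable (Fc E p c) := by
  apply Measurable.indicator ?_ measurableSet_ball.compl
  apply Measurable.div (measurable_const.indicator hE)
  exact ((continuous_const.sub continuous_id).norm.rpow_const (fun x => Or.inr hp)).measurable

lemma integrable_translate_bound (c : EuclideanSpace ℝ (Fin n)) {p : ℝ} (hp : (n:ℝ) < p) :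
    Integrable (fun y : EuclideanSpace ℝ (Fin n) => (1 + ‖y - c‖) ^ (-p)) := by
  have h0 : Integrable (fun y : EuclideanSpace ℝ (Fin n) => (1 + ‖y‖) ^ (-p)) :=
    integrable_one_add_norm (by rw [finrank_euclideanSpace_fin]; exact hp)
  have h1 := ((measurePreserving_add_right volume (-c)).integrable_comp_emb
      (MeasurableEquiv.addRight (-c)).measurableEmbedding).mpr h0
  simpa [Function.comp_def, sub_eq_add_neg] using h1

lemma Fc_integrable (hE : MeasurableSet E) (c : EuclideanSpace ℝ (Fin n)) {p : ℝ}
    (hpn : (n:ℝ) < p) : Integrable (Fc E p c) := by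
  have hp : 0 < p := lt_of_le_of_lt (Nat.cast_nonneg n) hpn
  refine ((integrable_translate_bound c hpn).const_mul ((2:ℝ)^p)).mono'
    ((Fc_measurable hE hp.le c).aestronglyMeasurable) ?_
  refine ae_of_all _ fun y => ?_
  rw [Real.norm_eq_abs, abs_of_nonneg (Fc_nonneg p c y)]
  exact Fc_le_bound hp c y

lemma tail_diff_bounded (n : ℕ) (E : Set (EuclideanSpace ℝ (Fin n))) (hE : MeasurableSet E)
    (q : EuclideanSpace ℝ (Fin n)) :
    ∃ C : ℝ, ∀ s ∈ Set.Ioc (0:ℝ) 1,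
      |tailIntegral n E s q 1 - tailIntegral n E s 0 1| ≤ C := by
  classical
  set K := ‖q‖ with hK
  have hKnn : 0 ≤ K := norm_nonneg q
  set M : ℝ := 2*K + 2 with hM
  set C₁ : ℝ := ((n:ℝ)+1) * (4:ℝ)^((n:ℝ)+1) * K with hC₁
  have hC₁nn : 0 ≤ C₁ := by positivity
  set H : EuclideanSpace ℝ (Fin n) → ℝ :=
    fun y => (ball (0:EuclideanSpace ℝ (Fin n)) M).indicator (fun _ => (2:ℝ)) y
      + C₁ * (1+‖y‖)^(-((n:ℝ)+1)) with hH
  have hHnn2 : ∀ y : EuclideanSpace ℝ (Fin n), 0 ≤ C₁ * (1+‖y‖)^(-((n:ℝ)+1)) :=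
    fun y => mul_nonneg hC₁nn (Real.rpow_nonneg (by positivity) _)
  have hHint : Integrable H := by
    apply Integrable.add
    · exact (integrableOn_const (C := (2:ℝ)) measure_ball_lt_top.ne).integrable_indicator
        measurableSet_ball
    · exact (integrable_one_add_norm
        (by rw [finrank_euclideanSpace_fin]; norm_num)).const_mul C₁
  refine ⟨∫ y, H y, fun s hs => ?_⟩
  obtain ⟨hs0, hs1⟩ := hs
  set p : ℝ := (n:ℝ) + s with hp
  have hpn : (n:ℝ) < p := by rw [hp]; linarith
  have hp0 : 0 < p := lt_of_le_of_lt (Nat.cast_nonneg n) hpn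
  have hp1 : p ≤ (n:ℝ) + 1 := by rw [hp]; linarith
  have hFq := Fc_integrable hE q hpn
  have hF0 := Fc_integrable hE (0:EuclideanSpace ℝ (Fin n)) hpn
  have hpt : ∀ y, |Fc E p q y - Fc E p (0:EuclideanSpace ℝ (Fin n)) y| ≤ H y := by
    intro y
    by_cases hy : ‖y‖ < M
    · have h2 : |Fc E p q y - Fc E p 0 y| ≤ 2 := by
        have h3 := Fc_nonneg (E := E) p q y
        have h4 := Fc_le_one (E := E) hp0.le q y
        have h5 := Fc_nonneg (E := E) p (0:EuclideanSpace ℝ (Fin n)) y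
        have h6 := Fc_le_one (E := E) hp0.le (0:EuclideanSpace ℝ (Fin n)) y
        rw [abs_le]; constructor <;> linarith
      have hball : y ∈ ball (0:EuclideanSpace ℝ (Fin n)) M := by
        rwa [mem_ball, dist_zero_right]
      rw [hH]
      simp only [Set.indicator_of_mem hball]
      linarith [hHnn2 y]
    · push_neg at hy
      have hyn : (2:ℝ) ≤ ‖y‖ := by rw [hM] at hy; linarith
      have hyK : 2*K + 2 ≤ ‖y‖ := by rw [hM] at hy; linarith
      have hb0 : y ∈ (ball (0:EuclideanSpace ℝ (Fin n)) 1)ᶜ := by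
        rw [Set.mem_compl_iff, mem_ball, dist_zero_right]; push_neg; linarith
      have haq : ‖y‖ - K ≤ ‖q - y‖ := by
        have h := norm_sub_norm_le y q
        rw [norm_sub_rev y q] at h
        linarith
      have hbq : y ∈ (ball q 1)ᶜ := by
        rw [Set.mem_compl_iff, mem_ball, dist_eq_norm, norm_sub_rev y q]; push_neg
        linarith
      set a := ‖q - y‖ with hadef
      set b := ‖(0:EuclideanSpace ℝ (Fin n)) - y‖ with hbdef
      have hbnorm : b = ‖y‖ := by rw [hbdef, zero_sub, norm_neg]
      have hFq_eq : Fc E p q y = E.indicator (fun _ => (1:ℝ)) y * a ^ (-p) := by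
        rw [Fc, Set.indicator_of_mem hbq, Real.rpow_neg (norm_nonneg _), div_eq_mul_inv]
      have hF0_eq : Fc E p 0 y = E.indicator (fun _ => (1:ℝ)) y * b ^ (-p) := by
        rw [Fc, Set.indicator_of_mem hb0, Real.rpow_neg (norm_nonneg _), div_eq_mul_inv]
      have hdiff : |Fc E p q y - Fc E p 0 y| ≤ |a ^ (-p) - b ^ (-p)| := by
        rw [hFq_eq, hF0_eq, ← mul_sub, abs_mul]
        have h1 : |E.indicator (fun _ => (1:ℝ)) y| ≤ 1 := by
          by_cases hyE : y ∈ E <;> simp [hyE]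
        nlinarith [abs_nonneg (a ^ (-p) - b ^ (-p))]
      set m : ℝ := ‖y‖/2 with hm
      have hm1 : (1:ℝ) ≤ m := by rw [hm]; linarith
      have hm0 : (0:ℝ) < m := by linarith
      have hma : m ≤ a := by rw [hm, hadef]; rw [hm] at hm1; linarith
      have hmb : m ≤ b := by rw [hm, hbnorm]; linarith
      have habs : |a - b| ≤ K := by
        have h := abs_norm_sub_norm_le (q - y) (-y)
        have h2 : (q - y) - (-y) = q := by abel
        rw [h2, norm_neg] at h
        rw [hadef, hbnorm, hK]
        exact h
      have hmvt := aux_mvt hp0 hm0 hma hmb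
      have h6 : m ^ (-(p+1)) ≤ m ^ (-((n:ℝ)+1)) :=
        Real.rpow_le_rpow_of_exponent_le hm1 (by linarith)
      have h7 : m ^ (-((n:ℝ)+1)) ≤ (4:ℝ)^((n:ℝ)+1) * (1+‖y‖)^(-((n:ℝ)+1)) := by
        apply aux_rpow_neg_le_mul hm0 (by positivity) (by positivity) (by norm_num)
        rw [hm]; linarith
      have hfinal : |Fc E p q y - Fc E p 0 y| ≤ C₁ * (1+‖y‖)^(-((n:ℝ)+1)) := by
        calc |Fc E p q y - Fc E p 0 y| ≤ |a ^ (-p) - b ^ (-p)| := hdiff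
          _ ≤ p * m ^ (-(p+1)) * |a - b| := hmvt
          _ ≤ (((n:ℝ)+1) * ((4:ℝ)^((n:ℝ)+1) * (1+‖y‖)^(-((n:ℝ)+1)))) * K := by
              apply mul_le_mul _ habs (abs_nonneg _) (by positivity)
              apply mul_le_mul hp1 (h6.trans h7) (by positivity) (by positivity)
          _ = C₁ * (1+‖y‖)^(-((n:ℝ)+1)) := by rw [hC₁]; ring
      have hind : 0 ≤ (ball (0:EuclideanSpace ℝ (Fin n)) M).indicator (fun _ => (2:ℝ)) y :=
        Set.indicator_apply_nonneg fun _ => by norm_num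
      rw [hH]
      simp only
      linarith
  rw [tail_eq_integral_Fc, tail_eq_integral_Fc, ← hp, ← integral_sub hFq hF0]
  calc |∫ y, (Fc E p q y - Fc E p (0:EuclideanSpace ℝ (Fin n)) y)|
      ≤ ∫ y, |Fc E p q y - Fc E p (0:EuclideanSpace ℝ (Fin n)) y| := by
        simpa [Real.norm_eq_abs] using norm_integral_le_integral_norm
          (μ := volume) (fun y => Fc E p q y - Fc E p (0:EuclideanSpace ℝ (Fin n)) y)
    _ ≤ ∫ y, H y := integral_mono ((hFq.sub hF0).abs) hHint hpt

lemma tendsto_tail_diff (n : ℕ) (E : Set (EuclideanSpace ℝ (Fin n))) (hE : MeasurableSet E)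
    (q : EuclideanSpace ℝ (Fin n)) :
    Tendsto (fun s => s * tailIntegral n E s q 1 - s * tailIntegral n E s 0 1)
      (𝓝[>] (0:ℝ)) (𝓝 0) := by
  obtain ⟨C, hC⟩ := tail_diff_bounded n E hE q
  have hmem : Set.Ioc (0:ℝ) 1 ∈ 𝓝[>] (0:ℝ) := Ioc_mem_nhdsGT zero_lt_one
  apply squeeze_zero_norm' (a := fun s : ℝ => s * C)
  · filter_upwards [hmem] with s hs
    rw [Real.norm_eq_abs, ← mul_sub, abs_mul, abs_of_pos hs.1]
    calc s * |tailIntegral n E s q 1 - tailIntegral n E s 0 1| ≤ s * C :=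
          mul_le_mul_of_nonneg_left (hC s hs) hs.1.le
      _ = s * C := rfl
  · have h1 : Tendsto (fun s : ℝ => s * C) (𝓝 0) (𝓝 (0 * C)) := tendsto_id.mul_const C
    rw [zero_mul] at h1
    exact h1.mono_left nhdsWithin_le_nhds

lemma tail_translate (n : ℕ) (E : Set (EuclideanSpace ℝ (Fin n)))
    (x : EuclideanSpace ℝ (Fin n)) (s : ℝ) :
    tailIntegral n ((fun y => y + x) '' E) s 0 1 = tailIntegral n E s (-x) 1 := by
  unfold tailIntegral
  have h := (measurePreserving_add_right volume x).setIntegral_preimage_emb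
      (MeasurableEquiv.addRight x).measurableEmbedding
      (fun y => ((fun y => y + x) '' E).indicator (fun _ => (1:ℝ)) y
        / ‖(0:EuclideanSpace ℝ (Fin n)) - y‖ ^ ((n:ℝ)+s))
      ((ball (0:EuclideanSpace ℝ (Fin n)) 1)ᶜ)
  rw [← h]
  have hpre : (fun y : EuclideanSpace ℝ (Fin n) => y + x) ⁻¹' (ball (0:EuclideanSpace ℝ (Fin n)) 1)ᶜ
      = (ball (-x) 1)ᶜ := by
    ext y
    simp only [Set.mem_preimage, Set.mem_compl_iff, mem_ball, dist_zero_right, dist_eq_norm]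
    rw [show y - -x = y + x by abel, sub_zero]
  rw [hpre]
  apply integral_congr_ae
  refine Filter.Eventually.of_forall fun y => ?_
  have hnorm : ‖(0:EuclideanSpace ℝ (Fin n)) - (y + x)‖ = ‖-x - y‖ := by
    rw [show (0:EuclideanSpace ℝ (Fin n)) - (y + x) = -(y+x) by abel,
      show -x - y = -(y+x) by abel]
  have hind : ((fun y => y + x) '' E).indicator (fun _ => (1:ℝ)) (y + x)
      = E.indicator (fun _ => (1:ℝ)) y := by
    by_cases hy : y ∈ E
    · rw [Set.indicator_of_mem hy,
        Set.indicator_of_mem (Set.mem_image_of_mem (fun y => y + x) hy)]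
    · rw [Set.indicator_of_notMem hy, Set.indicator_of_notMem]
      rintro ⟨z, hz, hzy⟩
      exact hy (add_right_cancel hzy ▸ hz)
  simp only [hnorm, hind]

lemma tail_rotate (n : ℕ) (E : Set (EuclideanSpace ℝ (Fin n)))
    (R : EuclideanSpace ℝ (Fin n) ≃ₗᵢ[ℝ] EuclideanSpace ℝ (Fin n)) (s : ℝ) :
    tailIntegral n ((⇑R) '' E) s 0 1 = tailIntegral n E s 0 1 := by
  unfold tailIntegral
  have h := (R.measurePreserving).setIntegral_preimage_emb
      (R.toHomeomorph.measurableEmbedding)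
      (fun y => ((⇑R) '' E).indicator (fun _ => (1:ℝ)) y
        / ‖(0:EuclideanSpace ℝ (Fin n)) - y‖ ^ ((n:ℝ)+s))
      ((ball (0:EuclideanSpace ℝ (Fin n)) 1)ᶜ)
  rw [← h]
  have hpre : (⇑R) ⁻¹' (ball (0:EuclideanSpace ℝ (Fin n)) 1)ᶜ
      = (ball (0:EuclideanSpace ℝ (Fin n)) 1)ᶜ := by
    ext y
    simp only [Set.mem_preimage, Set.mem_compl_iff, mem_ball, dist_zero_right]
    rw [R.norm_map]
  rw [hpre]
  apply integral_congr_ae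
  refine Filter.Eventually.of_forall fun y => ?_
  have hnorm : ‖(0:EuclideanSpace ℝ (Fin n)) - R y‖ = ‖(0:EuclideanSpace ℝ (Fin n)) - y‖ := by
    rw [zero_sub, zero_sub, norm_neg, norm_neg, R.norm_map]
  have hind : ((⇑R) '' E).indicator (fun _ => (1:ℝ)) (R y) = E.indicator (fun _ => (1:ℝ)) y := by
    by_cases hy : y ∈ E
    · rw [Set.indicator_of_mem hy, Set.indicator_of_mem (Set.mem_image_of_mem (⇑R) hy)]
    · rw [Set.indicator_of_notMem hy, Set.indicator_of_notMem]
      rintro ⟨z, hz, hzy⟩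
      exact hy (R.injective hzy ▸ hz)
  simp only [hnorm, hind]

/-- Invariance of `ᾱ` with respect to rigid motions: for every translation vector `x`
one has `ᾱ(E + x) = ᾱ(E)`, and for every rotation `R ∈ SO(n)` one has `ᾱ(R E) = ᾱ(E)`. -/
theorem alphaBar_invariant_rigid (n : ℕ) (E : Set (EuclideanSpace ℝ (Fin n)))
    (hE : MeasurableSet E) (x : EuclideanSpace ℝ (Fin n))
    (R : EuclideanSpace ℝ (Fin n) ≃ₗᵢ[ℝ] EuclideanSpace ℝ (Fin n))
    (hR : LinearMap.det (R.toLinearEquiv.toLinearMap) = 1) :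
    alphaBar n ((fun y => y + x) '' E) = alphaBar n E ∧
      alphaBar n ((⇑R) '' E) = alphaBar n E := by
  constructor
  · unfold alphaBar
    have heq : (fun s : ℝ => s * tailIntegral n ((fun y => y + x) '' E) s 0 1)
        = fun s : ℝ => s * tailIntegral n E s (-x) 1 := by
      funext s; rw [tail_translate]
    rw [heq]
    have hF : ∀ᶠ s in 𝓝[>] (0:ℝ), 0 ≤ s * tailIntegral n E s 0 1 := by
      filter_upwards [self_mem_nhdsWithin] with s hs
      exact mul_nonneg (le_of_lt hs) (tail_nonneg n E s 0 1)
    have hG : ∀ᶠ s in 𝓝[>] (0:ℝ), 0 ≤ s * tailIntegral n E s (-x) 1 := by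
      filter_upwards [self_mem_nhdsWithin] with s hs
      exact mul_nonneg (le_of_lt hs) (tail_nonneg n E s (-x) 1)
    exact aux_limsup_eq hF hG (tendsto_tail_diff n E hE (-x))
  · unfold alphaBar
    congr 1
    funext s
    rw [tail_rotate]
end

section
/- For any E, F ⊆ ℝⁿ, r > 0, q ∈ ℝⁿ and s ∈ (0,1), the weighted tails satisfy |∫_{ℝⁿ \ B_r(q)} χ_E(y)/|q−y|^{n+s} dy − ∫_{ℝⁿ \ B_r(q)} χ_F(y)/|q−y|^{n+s} dy| ≤ ∫_{ℝⁿ \ B_r(q)} χ_{E Δ F}(y)/|q−y|^{n+s} dy. Consequently, if |E Δ F| < ∞ and α(E) exists, then α(F) exists and equals α(E). -/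
open MeasureTheory Filter Metric Topology
open scoped symmDiff

/-- `α_s(E) = s · ∫_{ℝⁿ \ B₁} χ_E(y)/|y|^{n+s} dy`. -/
noncomputable def alphaS (n : ℕ) (E : Set (EuclideanSpace ℝ (Fin n))) (s : ℝ) : ℝ :=
  s * tailIntegral n E s 0 1

lemma kernel_integrableOn (n : ℕ) {s r : ℝ} (hs : 0 < s) (hr : 0 < r)
    (q : EuclideanSpace ℝ (Fin n)) :
    IntegrableOn (fun y => (‖q - y‖ ^ ((n : ℝ) + s))⁻¹) (ball q r)ᶜ := by
  set p : ℝ := (n : ℝ) + s with hp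
  have hp0 : 0 < p := by positivity
  have hnr : (Module.finrank ℝ (EuclideanSpace ℝ (Fin n)) : ℝ) < p := by
    simp [finrank_euclideanSpace_fin, hp]; linarith
  have hint : Integrable (fun y : EuclideanSpace ℝ (Fin n) => (1 + ‖q - y‖) ^ (-p)) :=
    (integrable_one_add_norm hnr).comp_sub_left q
  have hint2 : Integrable (fun y : EuclideanSpace ℝ (Fin n) =>
      (1 + 1 / r) ^ p * (1 + ‖q - y‖) ^ (-p)) := hint.const_mul _
  refine Integrable.mono' hint2.integrableOn ?_ ?_
  · exact (((measurable_const.sub measurable_id).norm.pow_const _).inv).aestronglyMeasurable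
  · filter_upwards [ae_restrict_mem measurableSet_ball.compl] with y hy
    have hz : r ≤ ‖q - y‖ := by
      have : r ≤ dist y q := le_of_not_gt hy
      rwa [dist_eq_norm, ← norm_neg, neg_sub] at this
    have hz0 : 0 < ‖q - y‖ := hr.trans_le hz
    have hle : 1 + ‖q - y‖ ≤ (1 + 1 / r) * ‖q - y‖ := by
      have : 1 ≤ ‖q - y‖ / r := (one_le_div hr).2 hz
      calc 1 + ‖q - y‖ ≤ ‖q - y‖ / r + ‖q - y‖ := by linarith
        _ = (1 + 1 / r) * ‖q - y‖ := by ring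
    have h1 : (1 + ‖q - y‖) ^ p ≤ (1 + 1 / r) ^ p * ‖q - y‖ ^ p := by
      rw [← Real.mul_rpow (by positivity) hz0.le]
      exact Real.rpow_le_rpow (by positivity) hle hp0.le
    have hpos1 : (0:ℝ) < (1 + ‖q - y‖) ^ p := by positivity
    rw [Real.norm_eq_abs, abs_of_nonneg (by positivity), Real.rpow_neg (by positivity)]
    rw [inv_le_iff_one_le_mul₀ (by positivity)]
    have h2 : (1:ℝ) ≤ ((1 + 1 / r) ^ p * ‖q - y‖ ^ p) / (1 + ‖q - y‖) ^ p :=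
      (one_le_div hpos1).2 h1
    rw [div_eq_mul_inv] at h2
    calc (1:ℝ) ≤ (1 + 1 / r) ^ p * ‖q - y‖ ^ p * ((1 + ‖q - y‖) ^ p)⁻¹ := h2
      _ = (1 + 1 / r) ^ p * ((1 + ‖q - y‖) ^ p)⁻¹ * ‖q - y‖ ^ p := by ring

lemma indicator_kernel_integrableOn (n : ℕ) {s r : ℝ} (hs : 0 < s) (hr : 0 < r)
    (q : EuclideanSpace ℝ (Fin n)) {G : Set (EuclideanSpace ℝ (Fin n))} (hG : MeasurableSet G) :
    IntegrableOn (fun y => G.indicator (fun _ => (1:ℝ)) y / ‖q - y‖ ^ ((n : ℝ) + s))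
      (ball q r)ᶜ := by
  refine Integrable.mono' (kernel_integrableOn n hs hr q) ?_ ?_
  · exact ((measurable_const.indicator hG).div
      ((measurable_const.sub measurable_id).norm.pow_const _)).aestronglyMeasurable
  · refine Eventually.of_forall fun y => ?_
    by_cases hy : y ∈ G
    · simp only [Set.indicator_of_mem hy, Real.norm_eq_abs, abs_div, abs_one, one_div]
      exact le_of_eq (abs_of_nonneg (by positivity))
    · simp [Set.indicator_of_notMem hy, Real.rpow_nonneg, inv_nonneg.2]


/-- The weighted tails of `E` and `F` differ at most by the weighted tail of `E Δ F`;
consequently, if `|E Δ F| < ∞` and `α(E)` exists, then `α(F)` exists and `α(F) = α(E)`. -/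
theorem tail_symmDiff (n : ℕ) (E F : Set (EuclideanSpace ℝ (Fin n)))
    (hE : MeasurableSet E) (hF : MeasurableSet F) :
    (∀ s ∈ Set.Ioo (0 : ℝ) 1, ∀ (q : EuclideanSpace ℝ (Fin n)) (r : ℝ), 0 < r →
      |tailIntegral n E s q r - tailIntegral n F s q r| ≤ tailIntegral n (E ∆ F) s q r) ∧
      (volume (E ∆ F) < ⊤ → ∀ a : ℝ, Tendsto (alphaS n E) (𝓝[>] (0 : ℝ)) (𝓝 a) →
        Tendsto (alphaS n F) (𝓝[>] (0 : ℝ)) (𝓝 a)) := by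
  have hΔ : MeasurableSet (E ∆ F) := (hE.diff hF).union (hF.diff hE)
  have habs : ∀ y : EuclideanSpace ℝ (Fin n),
      |E.indicator (fun _ => (1:ℝ)) y - F.indicator (fun _ => (1:ℝ)) y|
        = (E ∆ F).indicator (fun _ => (1:ℝ)) y := by
    intro y
    by_cases hyE : y ∈ E <;> by_cases hyF : y ∈ F <;>
      simp [Set.indicator_apply, Set.mem_symmDiff, hyE, hyF]
  have part1 : ∀ s ∈ Set.Ioo (0 : ℝ) 1, ∀ (q : EuclideanSpace ℝ (Fin n)) (r : ℝ), 0 < r →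
      |tailIntegral n E s q r - tailIntegral n F s q r| ≤ tailIntegral n (E ∆ F) s q r := by
    intro s hs q r hr
    have hiE := indicator_kernel_integrableOn n hs.1 hr q hE
    have hiF := indicator_kernel_integrableOn n hs.1 hr q hF
    have hiΔ := indicator_kernel_integrableOn n hs.1 hr q hΔ
    unfold tailIntegral
    rw [← integral_sub hiE hiF]
    rw [← Real.norm_eq_abs]
    refine (norm_integral_le_integral_norm _).trans ?_
    refine integral_mono (hiE.sub hiF).norm hiΔ fun y => ?_
    simp only [Pi.sub_apply, Real.norm_eq_abs, div_sub_div_same, abs_div,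
      abs_of_nonneg (Real.rpow_nonneg (norm_nonneg (q - y)) _), habs y, le_refl]
  refine ⟨part1, ?_⟩
  intro hfin a hEa
  set C : ℝ := (volume (E ∆ F)).toReal with hC
  have hC0 : 0 ≤ C := ENNReal.toReal_nonneg
  have hIndInt : Integrable ((E ∆ F).indicator (fun _ => (1:ℝ))) := by
    rw [integrable_indicator_iff hΔ]
    exact integrableOn_const hfin.ne
  have hbound : ∀ s ∈ Set.Ioo (0:ℝ) 1, tailIntegral n (E ∆ F) s 0 1 ≤ C := by
    intro s hs
    have hiΔ := indicator_kernel_integrableOn n hs.1 one_pos (0 : EuclideanSpace ℝ (Fin n)) hΔ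
    have step1 : tailIntegral n (E ∆ F) s 0 1
        ≤ ∫ y in (ball (0 : EuclideanSpace ℝ (Fin n)) 1)ᶜ, (E ∆ F).indicator (fun _ => (1:ℝ)) y := by
      refine integral_mono_ae hiΔ hIndInt.integrableOn ?_
      filter_upwards [ae_restrict_mem measurableSet_ball.compl] with y hy
      have h1 : (1:ℝ) ≤ ‖(0 : EuclideanSpace ℝ (Fin n)) - y‖ := by
        have : (1:ℝ) ≤ dist y 0 := le_of_not_gt hy
        rwa [dist_eq_norm, ← norm_neg, neg_sub] at this
      have hp : (1:ℝ) ≤ ‖(0 : EuclideanSpace ℝ (Fin n)) - y‖ ^ ((n:ℝ) + s) :=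
        Real.one_le_rpow h1 (add_nonneg (Nat.cast_nonneg n) hs.1.le)
      by_cases hyΔ : y ∈ E ∆ F
      · simp only [Set.indicator_of_mem hyΔ]
        rw [div_le_one (lt_of_lt_of_le one_pos hp)]
        exact hp
      · simp [Set.indicator_of_notMem hyΔ]
    refine step1.trans ?_
    have step2 := setIntegral_le_integral (s := (ball (0 : EuclideanSpace ℝ (Fin n)) 1)ᶜ) hIndInt
      (Eventually.of_forall fun y => Set.indicator_apply_nonneg fun _ => zero_le_one)
    refine step2.trans ?_
    rw [hC]
    exact le_of_eq (integral_indicator_one hΔ)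
  have key : ∀ᶠ s in 𝓝[>] (0:ℝ), ‖alphaS n F s - alphaS n E s‖ ≤ s * C := by
    filter_upwards [Ioo_mem_nhdsGT_of_mem (Set.mem_Ico.2 ⟨le_refl 0, one_pos⟩)] with s hs
    have h1 := part1 s hs 0 1 one_pos
    have : |alphaS n F s - alphaS n E s| = s * |tailIntegral n E s 0 1 - tailIntegral n F s 0 1| := by
      rw [alphaS, alphaS, ← mul_sub, abs_mul, abs_of_pos hs.1, abs_sub_comm]
    rw [Real.norm_eq_abs, this]
    exact mul_le_mul_of_nonneg_left (h1.trans (hbound s hs)) hs.1.le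
  have hdiff : Tendsto (fun s => alphaS n F s - alphaS n E s) (𝓝[>] (0:ℝ)) (𝓝 0) := by
    refine squeeze_zero_norm' key ?_
    have : Tendsto (fun s : ℝ => s * C) (𝓝 0) (𝓝 (0 * C)) :=
      (continuous_id.mul continuous_const).tendsto 0
    simpa using this.mono_left nhdsWithin_le_nhds
  have := hEa.add hdiff
  rw [add_zero] at this
  refine this.congr fun s => by ring
end

section
/- For the supergraph E = { (x, y) ∈ ℝ² : y ≥ x³ } of the cubic in the plane, α(E) exists and equals π. -/
open MeasureTheory Filter Metric Topology

open Set in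


lemma graph_null : volume {x : EuclideanSpace ℝ (Fin 2) | x 1 = (x 0) ^ 3} = 0 := by
  have hG2 : volume {p : ℝ × ℝ | p.2 = p.1 ^ 3} = 0 := by
    have hmeas : MeasurableSet {p : ℝ × ℝ | p.2 = p.1 ^ 3} :=
      measurableSet_eq_fun measurable_snd (measurable_fst.pow_const 3)
    rw [Measure.volume_eq_prod, Measure.prod_apply hmeas]
    have : ∀ x : ℝ, (Prod.mk x ⁻¹' {p : ℝ × ℝ | p.2 = p.1 ^ 3}) = {x ^ 3} := by
      intro x; ext y; simp [Set.mem_preimage, Set.mem_singleton_iff]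
    simp [this]
  have hG1 : volume {f : Fin 2 → ℝ | f 1 = (f 0) ^ 3} = 0 := by
    have h2 := MeasureTheory.volume_preserving_finTwoArrow ℝ
    have he : {f : Fin 2 → ℝ | f 1 = (f 0) ^ 3}
        = (MeasurableEquiv.finTwoArrow : (Fin 2 → ℝ) ≃ᵐ ℝ × ℝ) ⁻¹' {p : ℝ × ℝ | p.2 = p.1 ^ 3} := by
      ext f; simp [MeasurableEquiv.finTwoArrow]
    rw [he, h2.measure_preimage
      (measurableSet_eq_fun measurable_snd (measurable_fst.pow_const 3)).nullMeasurableSet]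
    exact hG2
  have h1 := EuclideanSpace.volume_preserving_symm_measurableEquiv_toLp (Fin 2)
  have he : {x : EuclideanSpace ℝ (Fin 2) | x 1 = (x 0) ^ 3}
      = (MeasurableEquiv.toLp 2 (Fin 2 → ℝ)).symm ⁻¹' {f : Fin 2 → ℝ | f 1 = (f 0) ^ 3} := rfl
  rw [he, h1.measure_preimage
    (measurableSet_eq_fun (measurable_pi_apply 1)
      ((measurable_pi_apply 0).pow_const 3)).nullMeasurableSet]
  exact hG1


open Set in

lemma integral_w {s : ℝ} (hs : 0 < s) :
    ∫ x in (ball (0 : EuclideanSpace ℝ (Fin 2)) 1)ᶜ, (‖x‖ ^ ((2 : ℝ) + s))⁻¹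
      = 2 * Real.pi / s := by
  set p : ℝ := 2 + s with hp
  have hA : (ball (0 : EuclideanSpace ℝ (Fin 2)) 1)ᶜ = {x | ‖x‖ ∈ Ici (1:ℝ)} := by
    ext x; simp [mem_ball, dist_zero_right, not_lt]
  have key : (∫ x in (ball (0 : EuclideanSpace ℝ (Fin 2)) 1)ᶜ, (‖x‖ ^ p)⁻¹)
      = ∫ x : EuclideanSpace ℝ (Fin 2), (Ici (1:ℝ)).indicator (fun y => (y ^ p)⁻¹) ‖x‖ := by
    rw [← integral_indicator (measurableSet_ball.compl)]
    congr 1; ext x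
    by_cases hx : x ∈ (ball (0 : EuclideanSpace ℝ (Fin 2)) 1)ᶜ
    · rw [Set.indicator_of_mem hx, Set.indicator_of_mem (by rw [hA] at hx; exact hx)]
    · rw [Set.indicator_of_notMem hx, Set.indicator_of_notMem (by rw [hA] at hx; exact hx)]
  rw [key, integral_fun_norm_addHaar volume (fun y => (Ici (1:ℝ)).indicator (fun y => (y ^ p)⁻¹) y)]
  have hdim : Module.finrank ℝ (EuclideanSpace ℝ (Fin 2)) = 2 := finrank_euclideanSpace_fin
  rw [hdim]
  have hvol : (volume (ball (0 : EuclideanSpace ℝ (Fin 2)) 1)).toReal = Real.pi := by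
    rw [EuclideanSpace.volume_ball]; norm_num; exact Real.sq_sqrt Real.pi_pos.le
  rw [measureReal_def, hvol]
  have hinner : (∫ y in Ioi (0:ℝ), y ^ (2 - 1) • (Ici (1:ℝ)).indicator (fun y => (y ^ p)⁻¹) y)
      = 1 / s := by
    have h1 : ∀ y : ℝ, y ^ (2 - 1) • (Ici (1:ℝ)).indicator (fun y => (y ^ p)⁻¹) y
        = (Ici (1:ℝ)).indicator (fun y => y * (y ^ p)⁻¹) y := by
      intro y
      by_cases hy : y ∈ Ici (1:ℝ) <;>
        simp [Set.indicator_of_mem, Set.indicator_of_notMem, hy, smul_eq_mul]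
    simp only [h1]
    rw [setIntegral_indicator measurableSet_Ici,
      show Ioi (0:ℝ) ∩ Ici 1 = Ici 1 by
        rw [Set.inter_eq_right]; exact fun x hx => (lt_of_lt_of_le one_pos hx : (0:ℝ) < x),
      integral_Ici_eq_integral_Ioi]
    have h2 : ∀ y ∈ Ioi (1:ℝ), y * (y ^ p)⁻¹ = y ^ (1 - p) := by
      intro y hy
      have hy0 : (0:ℝ) < y := lt_trans one_pos hy
      rw [Real.rpow_sub hy0, Real.rpow_one, div_eq_mul_inv]
    rw [setIntegral_congr_fun measurableSet_Ioi h2,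
      integral_Ioi_rpow_of_lt (by linarith : 1 - p < -1) one_pos]
    rw [Real.one_rpow, show 1 - p + 1 = -s by rw [hp]; ring]
    rw [neg_div_neg_eq, one_div]
  rw [hinner]
  simp [smul_eq_mul]
  ring


open Set in

lemma integrable_w {s : ℝ} (hs : 0 < s) :
    IntegrableOn (fun x : EuclideanSpace ℝ (Fin 2) => (‖x‖ ^ ((2 : ℝ) + s))⁻¹)
      (ball (0 : EuclideanSpace ℝ (Fin 2)) 1)ᶜ := by
  set p : ℝ := 2 + s with hp
  have hp0 : (0:ℝ) < p := by rw [hp]; linarith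
  have h0 : Integrable (fun x : EuclideanSpace ℝ (Fin 2) => (1 + ‖x‖) ^ (-p)) := by
    apply integrable_one_add_norm
    rw [finrank_euclideanSpace_fin]; norm_num; linarith
  have h1 : Integrable (fun x : EuclideanSpace ℝ (Fin 2) => (2:ℝ) ^ p * (1 + ‖x‖) ^ (-p)) :=
    h0.const_mul _
  refine (h1.restrict (s := (ball (0 : EuclideanSpace ℝ (Fin 2)) 1)ᶜ)).mono' ?_ ?_
  · exact (((continuous_norm.rpow_const (fun x => Or.inr hp0.le)).measurable).inv).aestronglyMeasurable
  · filter_upwards [ae_restrict_mem measurableSet_ball.compl] with x hx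
    have hx1 : (1:ℝ) ≤ ‖x‖ := by
      simpa [mem_ball, dist_zero_right, not_lt] using hx
    have hx0 : (0:ℝ) < ‖x‖ := lt_of_lt_of_le one_pos hx1
    have hb : (1 + ‖x‖) ^ p ≤ 2 ^ p * ‖x‖ ^ p := by
      rw [← Real.mul_rpow (by norm_num) hx0.le]
      exact Real.rpow_le_rpow (by linarith) (by linarith) hp0.le
    have hpos : (0:ℝ) < ‖x‖ ^ p := Real.rpow_pos_of_pos hx0 p
    have hpos2 : (0:ℝ) < (1 + ‖x‖) ^ p := Real.rpow_pos_of_pos (by linarith) p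
    rw [Real.norm_eq_abs, abs_of_nonneg (inv_nonneg.2 hpos.le), Real.rpow_neg (by linarith)]
    rw [show (2:ℝ) ^ p * ((1 + ‖x‖) ^ p)⁻¹ = ((1 + ‖x‖) ^ p / 2 ^ p)⁻¹ by
      rw [inv_div, div_eq_mul_inv]]
    apply inv_anti₀ (by positivity)
    rw [div_le_iff₀ (by positivity)]
    linarith [hb]


open Set in
lemma tail_half {s : ℝ} (hs : 0 < s) :
    tailIntegral 2 {x : EuclideanSpace ℝ (Fin 2) | (x 0) ^ 3 ≤ x 1} s 0 1 = Real.pi / s := by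
  set X := EuclideanSpace ℝ (Fin 2)
  set E : Set X := {x : X | (x 0) ^ 3 ≤ x 1} with hEdef
  set E' : Set X := {x : X | x 1 ≤ (x 0) ^ 3} with hE'def
  set A : Set X := (ball (0 : X) 1)ᶜ with hAdef
  set w : X → ℝ := fun x => (‖x‖ ^ ((2 : ℝ) + s))⁻¹ with hwdef
  have hwm : Measurable w :=
    ((continuous_norm.rpow_const (fun x => Or.inr (by linarith))).measurable).inv
  have hcoord : ∀ i : Fin 2, Measurable (fun x : X => x i) := fun i =>
    (measurable_pi_apply i).comp (MeasurableEquiv.toLp 2 (Fin 2 → ℝ)).symm.measurable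
  have hE : MeasurableSet E :=
    measurableSet_le ((hcoord 0).pow_const 3) (hcoord 1)
  have hE' : MeasurableSet E' :=
    measurableSet_le (hcoord 1) ((hcoord 0).pow_const 3)
  set F : X → ℝ := fun x => E.indicator (fun _ => (1:ℝ)) x * w x with hFdef
  set F' : X → ℝ := fun x => E'.indicator (fun _ => (1:ℝ)) x * w x with hF'def
  have htail : tailIntegral 2 E s 0 1 = ∫ x in A, F x := by
    unfold tailIntegral
    apply setIntegral_congr_fun (measurableSet_ball.compl)
    intro x _
    simp only [zero_sub, norm_neg, div_eq_mul_inv, hFdef, hwdef]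
    norm_num
    exact Or.inl rfl
  -- integrability
  have hbound : ∀ (S : Set X) (hS : MeasurableSet S),
      IntegrableOn (fun x => S.indicator (fun _ => (1:ℝ)) x * w x) A := by
    intro S hS
    refine (integrable_w hs).mono' ?_ ?_
    · exact ((measurable_const.indicator hS).mul hwm).aestronglyMeasurable
    · refine Filter.Eventually.of_forall fun x => ?_
      rw [Real.norm_eq_abs, abs_mul]
      have h1 : |S.indicator (fun _ => (1:ℝ)) x| ≤ 1 := by
        by_cases hx : x ∈ S <;> simp [Set.indicator_of_mem, Set.indicator_of_notMem, hx]
      have h2 : |w x| = w x := abs_of_nonneg (by positivity)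
      calc |S.indicator (fun _ => (1:ℝ)) x| * |w x| ≤ 1 * |w x| :=
            mul_le_mul_of_nonneg_right h1 (abs_nonneg _)
        _ = w x := by rw [one_mul, h2]
  have hFi : IntegrableOn F A := hbound E hE
  have hF'i : IntegrableOn F' A := hbound E' hE'
  -- symmetry
  have hsym : ∫ x in A, F x = ∫ x in A, F' x := by
    have hmp : MeasurePreserving (Neg.neg : X → X) volume volume :=
      Measure.measurePreserving_neg _
    have hemb : MeasurableEmbedding (Neg.neg : X → X) :=
      (Homeomorph.neg X).measurableEmbedding
    have hpre : (Neg.neg : X → X) ⁻¹' A = A := by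
      ext x; simp [hAdef, mem_ball, dist_zero_right]
    have := hmp.setIntegral_preimage_emb hemb F A
    rw [hpre] at this
    rw [← this]
    apply setIntegral_congr_fun (measurableSet_ball.compl)
    intro x _
    have hnegmem : (-x ∈ E) ↔ (x ∈ E') := by
      simp only [hEdef, hE'def, Set.mem_setOf_eq]
      have h0 : (-x) 0 = -(x 0) := rfl
      have h1 : (-x) 1 = -(x 1) := rfl
      rw [h0, h1, show (-(x 0))^3 = -((x 0)^3) by ring, neg_le_neg_iff]
    have hw : w (-x) = w x := by simp [hwdef]
    by_cases hx : x ∈ E'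
    · simp [hFdef, hF'def, Set.indicator_of_mem (hnegmem.mpr hx), Set.indicator_of_mem hx, hw]
    · simp [hFdef, hF'def, Set.indicator_of_notMem (fun h => hx (hnegmem.mp h)),
        Set.indicator_of_notMem hx, hw]
  -- sum a.e.
  have hae : ∀ᵐ x : X, F x + F' x = w x := by
    have h0 : ∀ᵐ x : X, ¬ (x 1 = (x 0) ^ 3) := by
      rw [ae_iff]; simpa using graph_null
    filter_upwards [h0] with x hx
    by_cases hxE : x ∈ E
    · have hxE' : x ∉ E' := fun h => hx (le_antisymm h hxE)
      simp [hFdef, hF'def, Set.indicator_of_mem hxE, Set.indicator_of_notMem hxE']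
    · have hxE' : x ∈ E' := by
        have h' : ¬ ((x 0) ^ 3 ≤ x 1) := hxE
        simp only [hE'def, Set.mem_setOf_eq]; linarith
      simp [hFdef, hF'def, Set.indicator_of_notMem hxE, Set.indicator_of_mem hxE']
  have hsum : (∫ x in A, F x) + (∫ x in A, F' x) = 2 * Real.pi / s := by
    rw [← integral_add hFi hF'i]
    rw [setIntegral_congr_ae (measurableSet_ball.compl) (hae.mono fun x hx => fun _ => hx)]
    exact integral_w hs
  have h2 : (∫ x in A, F x) + (∫ x in A, F x) = 2 * Real.pi / s := by
    nth_rewrite 2 [hsym]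
    exact hsum
  have h3 : 2 * Real.pi / s = 2 * (Real.pi / s) := by ring
  rw [htail]
  linarith [h2, h3]


/-- For the supergraph `E = {(x, y) ∈ ℝ² : y ≥ x³}` of the cubic in the plane,
`α(E)` exists and equals `π`. -/
theorem alpha_supergraph_cubic :
    Tendsto (alphaS 2 {x : EuclideanSpace ℝ (Fin 2) | (x 0) ^ 3 ≤ x 1})
      (𝓝[>] (0 : ℝ)) (𝓝 Real.pi) := by
  have hconst : ∀ s ∈ Set.Ioi (0:ℝ),
      alphaS 2 {x : EuclideanSpace ℝ (Fin 2) | (x 0) ^ 3 ≤ x 1} s = Real.pi := by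
    intro s hs
    have hs' : 0 < s := hs
    unfold alphaS
    rw [tail_half hs']
    field_simp
  apply Tendsto.congr' _ (tendsto_const_nhds (x := Real.pi) (f := 𝓝[>] (0:ℝ)))
  filter_upwards [self_mem_nhdsWithin] with s hs
  exact (hconst s hs).symm
end

section
/- Let Ω ⊆ ℝⁿ be a bounded open set with C² boundary, and let r₀ > 0 be such that Ω satisfies a strict interior and exterior ball condition of radius 2r₀ at every boundary point. Then for every δ ∈ [−r₀, r₀], the sublevel set Ω_δ := { x : d̄_Ω(x) < δ } satisfies a uniform interior and exterior ball condition of radius at least r₀. -/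
open MeasureTheory Filter Metric Topology

/-- The signed distance from `∂Ω`, negative inside `Ω`:
`d̄_Ω(x) = d(x, Ω) − d(x, ℝⁿ \ Ω)`. -/
noncomputable def sgnDist (n : ℕ) (Ω : Set (EuclideanSpace ℝ (Fin n)))
    (x : EuclideanSpace ℝ (Fin n)) : ℝ :=
  Metric.infDist x Ω - Metric.infDist x Ωᶜ

section Aux

variable {E : Type*} [NormedAddCommGroup E] [NormedSpace ℝ E]

/-- If `S` contains a ball of radius `R` around `c` and `z` is at distance at least `R`
from `c`, then `infDist z S ≤ dist z c - R`. -/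
lemma aux_infDist_le_of_ball_subset {S : Set E} {c z : E} {R : ℝ} (hR : 0 < R)
    (hS : Metric.ball c R ⊆ S) (hz : R ≤ dist z c) :
    Metric.infDist z S ≤ dist z c - R := by
  have hd : 0 < dist z c := lt_of_lt_of_le hR hz
  refine le_of_forall_pos_le_add fun ε hε => ?_
  set ε' := min ε R with hε'def
  have hε'0 : 0 < ε' := lt_min hε hR
  have hε'R : ε' ≤ R := min_le_right _ _
  set t : ℝ := (R - ε') / dist z c with htdef
  have ht0 : 0 ≤ t := div_nonneg (by linarith) hd.le
  have ht1 : t ≤ 1 := by rw [div_le_one hd]; linarith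
  have htmul : t * dist z c = R - ε' := div_mul_cancel₀ _ hd.ne'
  set w := c + t • (z - c) with hwdef
  have hwc : dist w c = R - ε' := by
    have h1 : w - c = t • (z - c) := by rw [hwdef]; abel
    rw [dist_eq_norm, h1, norm_smul, Real.norm_eq_abs, abs_of_nonneg ht0, ← dist_eq_norm, htmul]
  have hwS : w ∈ S := hS (Metric.mem_ball.2 (by rw [hwc]; linarith))
  have hzw : dist z w = dist z c - (R - ε') := by
    have h1 : z - w = (1 - t) • (z - c) := by
      rw [hwdef, sub_smul, one_smul]; abel
    rw [dist_eq_norm, h1, norm_smul, Real.norm_eq_abs, abs_of_nonneg (by linarith),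
      ← dist_eq_norm, sub_mul, one_mul, htmul]
  have hle : Metric.infDist z S ≤ dist z w := Metric.infDist_le_dist_of_mem hwS
  have : ε' ≤ ε := min_le_left _ _
  linarith

/-- If `S` contains a ball of radius `R` around `c` and `z` is inside that ball,
then `R - dist z c ≤ infDist z Sᶜ`. -/
lemma aux_le_infDist_compl_of_ball_subset {S : Set E} {c z : E} {R : ℝ}
    (hS : Metric.ball c R ⊆ S) (hne : Sᶜ.Nonempty) (hz : dist z c < R) :
    R - dist z c ≤ Metric.infDist z Sᶜ := by
  by_contra hcon
  push_neg at hcon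
  obtain ⟨w, hwS, hwd⟩ := (Metric.infDist_lt_iff hne).1 hcon
  have hwc : R ≤ dist w c := by
    by_contra h
    push_neg at h
    exact hwS (hS (Metric.mem_ball.2 h))
  have := dist_triangle w z c
  rw [dist_comm w z] at this
  linarith

end Aux

/-- Let `Ω ⊆ ℝⁿ` be a bounded open set with `C²` boundary (encoded by the signed distance
being `C²` on the tubular neighborhood `{|d̄_Ω| < 2r₀}`) satisfying a strict interior and
exterior ball condition of radius `2r₀` at every boundary point. Then for every
`δ ∈ [−r₀, r₀]`, the set `Ω_δ = {d̄_Ω < δ}` satisfies a uniform interior and exterior ball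
condition of radius at least `r₀`. -/
theorem uniform_ball_condition_sublevel (n : ℕ) (Ω : Set (EuclideanSpace ℝ (Fin n)))
    (hΩo : IsOpen Ω) (hΩb : Bornology.IsBounded Ω) (r₀ : ℝ) (hr₀ : 0 < r₀)
    (hC2 : ContDiffOn ℝ 2 (sgnDist n Ω) {x | |sgnDist n Ω x| < 2 * r₀})
    (hint : ∀ x ∈ frontier Ω, ∃ y, ball y (2 * r₀) ⊆ Ω ∧
      sphere y (2 * r₀) ∩ frontier Ω = {x})
    (hext : ∀ x ∈ frontier Ω, ∃ y, ball y (2 * r₀) ⊆ (closure Ω)ᶜ ∧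
      sphere y (2 * r₀) ∩ frontier Ω = {x}) :
    ∀ δ ∈ Set.Icc (-r₀) r₀,
      (∀ x ∈ frontier {z | sgnDist n Ω z < δ},
        ∃ y, ball y r₀ ⊆ {z | sgnDist n Ω z < δ} ∧ x ∈ sphere y r₀) ∧
      (∀ x ∈ frontier {z | sgnDist n Ω z < δ},
        ∃ y, ball y r₀ ⊆ (closure {z | sgnDist n Ω z < δ})ᶜ ∧ x ∈ sphere y r₀) := by
  intro δ hδ
  obtain ⟨hδ1, hδ2⟩ := hδ
  have hcont : Continuous (sgnDist n Ω) :=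
    (Metric.continuous_infDist_pt Ω).sub (Metric.continuous_infDist_pt Ωᶜ)
  have hclos : closure {z | sgnDist n Ω z < δ} ⊆ {z | sgnDist n Ω z ≤ δ} :=
    closure_lt_subset_le hcont continuous_const
  have hopen : IsOpen {z | sgnDist n Ω z < δ} := isOpen_lt hcont continuous_const
  by_cases hfe : frontier Ω = ∅
  · -- degenerate case: Ω is clopen, hence ∅ or univ, and sgnDist ≡ 0
    have h0 : ∀ x, sgnDist n Ω x = 0 := by
      rcases frontier_eq_empty_iff.mp hfe with h | h
      · intro x
        simp [sgnDist, h, Metric.infDist_empty,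
          Metric.infDist_zero_of_mem (Set.mem_univ x)]
      · intro x
        simp [sgnDist, h, Metric.infDist_empty,
          Metric.infDist_zero_of_mem (Set.mem_univ x)]
    have hfr : frontier {z | sgnDist n Ω z < δ} = ∅ := by
      rcases lt_or_ge 0 δ with h | h
      · have : {z | sgnDist n Ω z < δ} = Set.univ := by
          ext z; simp [h0 z, h]
        simp [this]
      · have : {z | sgnDist n Ω z < δ} = ∅ := by
          ext z; simp [h0 z, not_lt.2 h]
        simp [this]
    constructor <;> intro x hx <;> (rw [hfr] at hx; exact absurd hx (Set.notMem_empty x))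
  · -- main case
    have hfne : (frontier Ω).Nonempty := Set.nonempty_iff_ne_empty.2 hfe
    have hfront_notmem : ∀ p ∈ frontier Ω, p ∉ Ω := by
      intro p hp hpΩ
      exact hp.2 (by rw [hΩo.interior_eq]; exact hpΩ)
    have hΩcne : Ωᶜ.Nonempty := hfne.imp (fun p hp => hfront_notmem p hp)
    have hΩne : Ω.Nonempty := by
      obtain ⟨p, hp⟩ := hfne
      rcases Set.eq_empty_or_nonempty Ω with h | h
      · have := hp.1
        rw [h, closure_empty] at this
        exact absurd this (Set.notMem_empty p)
      · exact h
    have hr2 : (0:ℝ) < 2 * r₀ := by linarith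
    -- upper and lower barriers from the interior/exterior ball conditions
    have barrier : ∀ p ∈ frontier Ω, ∃ ν : EuclideanSpace ℝ (Fin n), ‖ν‖ = 1 ∧
        (∀ z, sgnDist n Ω z ≤ dist z (p - (2*r₀) • ν) - 2*r₀) ∧
        (∀ z, 2*r₀ - dist z (p + (2*r₀) • ν) ≤ sgnDist n Ω z) := by
      intro p hp
      obtain ⟨yi, hi1, hi2⟩ := hint p hp
      obtain ⟨ye, he1, he2⟩ := hext p hp
      have hpi : dist p yi = 2*r₀ := by
        have : p ∈ sphere yi (2*r₀) ∩ frontier Ω := hi2 ▸ rfl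
        exact this.1
      have hpe : dist p ye = 2*r₀ := by
        have : p ∈ sphere ye (2*r₀) ∩ frontier Ω := he2 ▸ rfl
        exact this.1
      -- the two tangent balls are diametrically opposite
      have hdisj : ∀ w, w ∈ ball yi (2*r₀) → w ∉ ball ye (2*r₀) := by
        intro w h1 h2
        exact (he1 h2) (subset_closure (hi1 h1))
      have h4 : 4*r₀ ≤ dist yi ye := by
        by_contra h
        push_neg at h
        have hcd : dist ye yi = dist yi ye := dist_comm _ _
        have hm1 : dist (midpoint ℝ yi ye) yi < 2*r₀ := by
          rw [dist_comm, dist_left_midpoint]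
          simp only [Real.norm_ofNat]
          linarith
        have hm2 : dist (midpoint ℝ yi ye) ye < 2*r₀ := by
          rw [dist_comm, dist_right_midpoint]
          simp only [Real.norm_ofNat]
          linarith
        exact hdisj _ (Metric.mem_ball.2 hm1) (Metric.mem_ball.2 hm2)
      have htri : dist yi ye ≤ 4*r₀ := by
        calc dist yi ye ≤ dist yi p + dist p ye := dist_triangle _ _ _
          _ = 4*r₀ := by rw [dist_comm yi p, hpi, hpe]; ring
      have heq : dist yi ye = 4*r₀ := le_antisymm htri h4
      have hvec : p - yi = ye - p := by
        refine eq_of_norm_eq_of_norm_add_eq ?_ ?_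
        · rw [← dist_eq_norm, ← dist_eq_norm, dist_comm ye p, hpi, hpe]
        · have h1 : (p - yi) + (ye - p) = ye - yi := by abel
          rw [h1, ← dist_eq_norm, ← dist_eq_norm, ← dist_eq_norm, dist_comm ye yi, heq,
            dist_comm ye p, hpi, hpe]
          ring
      set ν : EuclideanSpace ℝ (Fin n) := (1/(2*r₀)) • (p - yi) with hνdef
      have hν1 : ‖ν‖ = 1 := by
        rw [hνdef, norm_smul, Real.norm_eq_abs, abs_of_pos (by positivity), ← dist_eq_norm, hpi]
        field_simp
      have hyi : yi = p - (2*r₀) • ν := by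
        rw [hνdef, smul_smul]
        rw [mul_one_div, div_self hr2.ne']
        rw [one_smul]
        abel
      have hye : ye = p + (2*r₀) • ν := by
        rw [hνdef, smul_smul]
        rw [mul_one_div, div_self hr2.ne']
        rw [one_smul, hvec]
        abel
      refine ⟨ν, hν1, ?_, ?_⟩
      · -- upper barrier
        intro z
        rw [← hyi]
        rcases lt_or_ge (dist z yi) (2*r₀) with h | h
        · have hzΩ : z ∈ Ω := hi1 (Metric.mem_ball.2 h)
          have h1 : Metric.infDist z Ω = 0 := Metric.infDist_zero_of_mem hzΩ
          have h2 : 2*r₀ - dist z yi ≤ Metric.infDist z Ωᶜ :=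
            aux_le_infDist_compl_of_ball_subset hi1 hΩcne h
          simp only [sgnDist, h1]
          linarith
        · have h1 : Metric.infDist z Ω ≤ dist z yi - 2*r₀ :=
            aux_infDist_le_of_ball_subset hr2 hi1 h
          have h2 : 0 ≤ Metric.infDist z Ωᶜ := Metric.infDist_nonneg
          simp only [sgnDist]
          linarith
      · -- lower barrier
        intro z
        rw [← hye]
        have he1' : ball ye (2*r₀) ⊆ Ωᶜ := fun w hw hwΩ => (he1 hw) (subset_closure hwΩ)
        rcases lt_or_ge (dist z ye) (2*r₀) with h | h
        · have hzc : z ∈ (closure Ω)ᶜ := he1 (Metric.mem_ball.2 h)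
          have h1 : Metric.infDist z Ωᶜ = 0 :=
            Metric.infDist_zero_of_mem (fun hzΩ => hzc (subset_closure hzΩ))
          have h2 : 2*r₀ - dist z ye ≤ Metric.infDist z ((closure Ω)ᶜ)ᶜ :=
            aux_le_infDist_compl_of_ball_subset he1 (by
              rw [compl_compl]; exact hΩne.mono subset_closure) h
          rw [compl_compl] at h2
          rw [Metric.infDist_closure] at h2
          simp only [sgnDist, h1]
          linarith
        · have h1 : Metric.infDist z Ωᶜ ≤ dist z ye - 2*r₀ :=
            aux_infDist_le_of_ball_subset hr2 he1' h
          have h2 : 0 ≤ Metric.infDist z Ω := Metric.infDist_nonneg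
          simp only [sgnDist]
          linarith
    -- key step: normal decomposition at each frontier point of the sublevel set
    have key : ∀ x ∈ frontier {z | sgnDist n Ω z < δ},
        ∃ p ν : EuclideanSpace ℝ (Fin n), ‖ν‖ = 1 ∧ x = p + δ • ν ∧
          (∀ z, sgnDist n Ω z ≤ dist z (p - (2*r₀) • ν) - 2*r₀) ∧
          (∀ z, 2*r₀ - dist z (p + (2*r₀) • ν) ≤ sgnDist n Ω z) := by
      intro x hx
      have hδx : sgnDist n Ω x = δ := by
        have h1 : x ∈ closure {z | sgnDist n Ω z < δ} := hx.1
        have h2 : x ∉ {z | sgnDist n Ω z < δ} := fun h =>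
          hx.2 (by rw [hopen.interior_eq]; exact h)
        exact le_antisymm (hclos h1) (not_lt.1 h2)
      -- find a nearest boundary point p with dist x p = |δ|
      obtain ⟨p, hpf, hpd⟩ : ∃ p ∈ frontier Ω, dist x p = |δ| := by
        by_cases hxΩ : x ∈ Ω
        · have h1 : Metric.infDist x Ω = 0 := Metric.infDist_zero_of_mem hxΩ
          have hδeq : δ = -Metric.infDist x Ωᶜ := by
            rw [← hδx]; simp [sgnDist, h1]
          have hΩnu : Ω ≠ Set.univ := by
            intro h
            rw [h, Set.compl_univ] at hΩcne
            exact Set.not_nonempty_empty hΩcne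
          obtain ⟨p, hpf, hpd⟩ := exists_mem_frontier_infDist_compl_eq_dist hxΩ hΩnu
          refine ⟨p, hpf, ?_⟩
          rw [← hpd, hδeq, abs_neg, abs_of_nonneg Metric.infDist_nonneg]
        · have h2 : Metric.infDist x Ωᶜ = 0 :=
            Metric.infDist_zero_of_mem (Set.mem_compl hxΩ)
          have hδeq : δ = Metric.infDist x Ω := by rw [← hδx]; simp [sgnDist, h2]
          rcases eq_or_lt_of_le (hδeq ▸ Metric.infDist_nonneg : (0:ℝ) ≤ δ) with h | h
          · -- δ = 0 and x itself is a boundary point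
            have hxc : x ∈ closure Ω := by
              rw [Metric.mem_closure_iff_infDist_zero hΩne, ← hδeq, ← h]
            exact ⟨x, ⟨hxc, fun hi => hxΩ (hΩo.interior_eq ▸ hi)⟩,
              by rw [dist_self, ← h, abs_zero]⟩
          · -- δ > 0: use compactness of the closure
            have hcomp : IsCompact (closure Ω) :=
              Metric.isCompact_of_isClosed_isBounded isClosed_closure hΩb.closure
            obtain ⟨q, hqc, hqd⟩ := hcomp.exists_infDist_eq_dist
              (hΩne.mono subset_closure) x
            rw [Metric.infDist_closure, ← hδeq] at hqd
            have hqΩ : q ∉ Ω := by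
              intro hqΩ
              obtain ⟨ε, hε0, hεb⟩ := Metric.isOpen_iff.1 hΩo q hqΩ
              set s : ℝ := min (ε/2) δ with hsdef
              have hs0 : 0 < s := lt_min (by linarith) h
              have hsδ : s ≤ δ := min_le_right _ _
              have hxq : dist x q = δ := hqd.symm
              set w := q + (s/δ) • (x - q) with hwdef
              have hwq : dist w q = s := by
                have h1 : w - q = (s/δ) • (x - q) := by rw [hwdef]; abel
                rw [dist_eq_norm, h1, norm_smul, Real.norm_eq_abs,
                  abs_of_nonneg (div_nonneg hs0.le h.le), ← dist_eq_norm, hxq,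
                  div_mul_cancel₀ _ h.ne']
              have hwΩ : w ∈ Ω := hεb (Metric.mem_ball.2 (by
                rw [hwq]; exact lt_of_le_of_lt (min_le_left _ _) (by linarith)))
              have hxw : dist x w = δ - s := by
                have h1 : x - w = (1 - s/δ) • (x - q) := by
                  rw [hwdef, sub_smul, one_smul]; abel
                have h2 : s/δ ≤ 1 := by rw [div_le_one h]; exact hsδ
                rw [dist_eq_norm, h1, norm_smul, Real.norm_eq_abs,
                  abs_of_nonneg (by linarith), ← dist_eq_norm, hxq, sub_mul,
                  one_mul, div_mul_cancel₀ _ h.ne']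
              have := Metric.infDist_le_dist_of_mem (x := x) hwΩ
              rw [hxw, ← hδeq] at this
              linarith
            refine ⟨q, ⟨hqc, fun hqi => hqΩ (hΩo.interior_eq ▸ hqi)⟩, ?_⟩
            rw [hqd.symm, abs_of_pos h]
      obtain ⟨ν, hν1, hA, hB⟩ := barrier p hpf
      refine ⟨p, ν, hν1, ?_, hA, hB⟩
      -- show x = p + δ • ν using equality in the triangle inequality
      have hxp : ‖x - p‖ = |δ| := by rw [← dist_eq_norm, hpd]
      have hgoal : x - p = δ • ν := by
        rcases le_or_gt 0 δ with hδ0 | hδ0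
        · -- use the interior ball center yi = p - 2r₀ ν
          have hAx := hA x
          rw [hδx] at hAx
          have hub : dist x (p - (2*r₀) • ν) ≤ δ + 2*r₀ := by
            calc dist x (p - (2*r₀) • ν) ≤ dist x p + dist p (p - (2*r₀) • ν) :=
                  dist_triangle _ _ _
              _ = δ + 2*r₀ := by
                  rw [hpd, abs_of_nonneg hδ0, dist_eq_norm]
                  have : p - (p - (2*r₀) • ν) = (2*r₀) • ν := by abel
                  rw [this, norm_smul, Real.norm_eq_abs, abs_of_pos hr2, hν1, mul_one]
          have heq : dist x (p - (2*r₀) • ν) = δ + 2*r₀ := le_antisymm hub (by linarith)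
          have hsr : SameRay ℝ (x - p) (p - (p - (2*r₀) • ν)) := by
            rw [sameRay_iff_norm_add]
            have h1 : (x - p) + (p - (p - (2*r₀) • ν)) = x - (p - (2*r₀) • ν) := by abel
            have h2 : p - (p - (2*r₀) • ν) = (2*r₀) • ν := by abel
            rw [h1, ← dist_eq_norm, heq, hxp, abs_of_nonneg hδ0, h2, norm_smul,
              Real.norm_eq_abs, abs_of_pos hr2, hν1, mul_one]
          have hsm := hsr.norm_smul_eq
          have h2 : p - (p - (2*r₀) • ν) = (2*r₀) • ν := by abel
          rw [hxp, abs_of_nonneg hδ0, h2, norm_smul, Real.norm_eq_abs, abs_of_pos hr2, hν1,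
            mul_one] at hsm
          -- hsm : δ • ((2*r₀) • ν) = (2*r₀) • (x - p)
          have h3 : (2*r₀) • (δ • ν) = (2*r₀) • (x - p) := by
            rw [smul_comm]; exact hsm
          exact (smul_right_injective _ hr2.ne' h3).symm
        · -- use the exterior ball center ye = p + 2r₀ ν
          have hBx := hB x
          rw [hδx] at hBx
          have hub : dist x (p + (2*r₀) • ν) ≤ -δ + 2*r₀ := by
            calc dist x (p + (2*r₀) • ν) ≤ dist x p + dist p (p + (2*r₀) • ν) :=
                  dist_triangle _ _ _
              _ = -δ + 2*r₀ := by
                  rw [hpd, abs_of_neg hδ0, dist_eq_norm]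
                  have : p - (p + (2*r₀) • ν) = -((2*r₀) • ν) := by abel
                  rw [this, norm_neg, norm_smul, Real.norm_eq_abs, abs_of_pos hr2, hν1, mul_one]
          have heq : dist x (p + (2*r₀) • ν) = -δ + 2*r₀ := le_antisymm hub (by linarith)
          have hsr : SameRay ℝ (x - p) (p - (p + (2*r₀) • ν)) := by
            rw [sameRay_iff_norm_add]
            have h1 : (x - p) + (p - (p + (2*r₀) • ν)) = x - (p + (2*r₀) • ν) := by abel
            have h2 : p - (p + (2*r₀) • ν) = -((2*r₀) • ν) := by abel
            rw [h1, ← dist_eq_norm, heq, hxp, abs_of_neg hδ0, h2, norm_neg, norm_smul,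
              Real.norm_eq_abs, abs_of_pos hr2, hν1, mul_one]
          have hsm := hsr.norm_smul_eq
          have h2 : p - (p + (2*r₀) • ν) = -((2*r₀) • ν) := by abel
          rw [hxp, abs_of_neg hδ0, h2, norm_neg, norm_smul, Real.norm_eq_abs,
            abs_of_pos hr2, hν1, mul_one] at hsm
          -- hsm : (-δ) • (-((2*r₀) • ν)) = (2*r₀) • (x - p)
          have h3 : (2*r₀) • (δ • ν) = (2*r₀) • (x - p) := by
            rw [← hsm, smul_neg, neg_smul, neg_neg, smul_comm]
          exact (smul_right_injective _ hr2.ne' h3).symm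
      rw [← hgoal]; abel
    -- conclude the two uniform ball conditions
    constructor
    · -- interior ball of radius r₀
      intro x hx
      obtain ⟨p, ν, hν1, hxpν, hA, _⟩ := key x hx
      refine ⟨p + (δ - r₀) • ν, ?_, ?_⟩
      · intro z hz
        have hAz := hA z
        have hd1 : dist (p + (δ - r₀) • ν) (p - (2*r₀) • ν) = δ + r₀ := by
          rw [dist_eq_norm]
          have : (p + (δ - r₀) • ν) - (p - (2*r₀) • ν) = (δ + r₀) • ν := by
            module
          rw [this, norm_smul, Real.norm_eq_abs, abs_of_nonneg (by linarith), hν1, mul_one]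
        have htz : dist z (p - (2*r₀) • ν) < r₀ + (δ + r₀) := by
          calc dist z (p - (2*r₀) • ν) ≤ dist z (p + (δ - r₀) • ν)
                + dist (p + (δ - r₀) • ν) (p - (2*r₀) • ν) := dist_triangle _ _ _
            _ < r₀ + (δ + r₀) := by
                rw [hd1]
                exact add_lt_add_left (Metric.mem_ball.1 hz) _
        show sgnDist n Ω z < δ
        linarith
      · show dist x (p + (δ - r₀) • ν) = r₀
        rw [hxpν, dist_eq_norm]
        have : (p + δ • ν) - (p + (δ - r₀) • ν) = r₀ • ν := by module
        rw [this, norm_smul, Real.norm_eq_abs, abs_of_pos hr₀, hν1, mul_one]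
    · -- exterior ball of radius r₀
      intro x hx
      obtain ⟨p, ν, hν1, hxpν, _, hB⟩ := key x hx
      refine ⟨p + (δ + r₀) • ν, ?_, ?_⟩
      · intro z hz
        have hBz := hB z
        have hd1 : dist (p + (δ + r₀) • ν) (p + (2*r₀) • ν) = r₀ - δ := by
          rw [dist_eq_norm]
          have : (p + (δ + r₀) • ν) - (p + (2*r₀) • ν) = (δ - r₀) • ν := by module
          rw [this, norm_smul, Real.norm_eq_abs, abs_of_nonpos (by linarith), hν1, mul_one]
          ring
        have htz : dist z (p + (2*r₀) • ν) < r₀ + (r₀ - δ) := by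
          calc dist z (p + (2*r₀) • ν) ≤ dist z (p + (δ + r₀) • ν)
                + dist (p + (δ + r₀) • ν) (p + (2*r₀) • ν) := dist_triangle _ _ _
            _ < r₀ + (r₀ - δ) := by
                rw [hd1]
                exact add_lt_add_left (Metric.mem_ball.1 hz) _
        have hzgt : δ < sgnDist n Ω z := by linarith
        intro hzc
        exact absurd (hclos hzc) (not_le.2 hzgt)
      · show dist x (p + (δ + r₀) • ν) = r₀
        rw [hxpν, dist_eq_norm]
        have : (p + δ • ν) - (p + (δ + r₀) • ν) = (-r₀) • ν := by module
        rw [this, norm_smul, Real.norm_eq_abs, abs_of_neg (by linarith : -r₀ < 0), hν1, mul_one]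
        ring
end
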